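/- Let A ∈ ℝ^{n×n} be Hurwitz and B ∈ ℝ^{n×1}. Then for every orthonormal basis C₁, …, C_n of ℝ^n, the minimum ISS-gain of ẋ = Ax + Bu satisfies γ ≤ √( Σ_{i=1}^n ( ∫₀^{+∞} |C_iᵀ e^{As} B| ds )² ); consequently γ ≤ inf over all orthonormal bases C₁,…,C_n of ℝ^n of √( Σ_{i=1}^n ( ∫₀^{+∞} |C_iᵀ e^{As} B| ds )² ). -/

import Mathlib

open Filter MeasureTheory NormedSpace

noncomputable section

/-- Euclidean norm of a vector in `ℝ^k`. -/
def eNorm {k : ℕ} (v : Fin k → ℝ) : ℝ := Real.sqrt (∑ i, v i ^ 2)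

/-- Matrix norm induced by the Euclidean norms. -/
def matNorm {k l : ℕ} (M : Matrix (Fin k) (Fin l) ℝ) : ℝ :=
  sSup {r | ∃ x : Fin l → ℝ, eNorm x = 1 ∧ r = eNorm (M.mulVec x)}

/-- `A` is Hurwitz: every (complex) eigenvalue of `A` has negative real part. -/
def Hurwitz {n : ℕ} (A : Matrix (Fin n) (Fin n) ℝ) : Prop :=
  ∀ μ ∈ spectrum ℂ (A.map (Complex.ofReal)), μ.re < 0

/-- The matrix exponential `e^{tA}`. -/
def mexp {n : ℕ} (A : Matrix (Fin n) (Fin n) ℝ) (t : ℝ) : Matrix (Fin n) (Fin n) ℝ :=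
  exp (t • A)


namespace ISSAux

section ComplexPart

variable {n : ℕ}

attribute [local instance] Matrix.linftyOpNormedRing Matrix.linftyOpNormedAlgebra

local notation "𝕄" => Matrix (Fin n) (Fin n) ℂ

theorem exists_factor (A' : 𝕄) (μ : ℂ) :
    ∃ Q : 𝕄, (exp A' - algebraMap ℂ 𝕄 (Complex.exp μ)) ^ n
      = Q * (A' - algebraMap ℂ 𝕄 μ) ^ n := by
  set N : 𝕄 := A' - algebraMap ℂ 𝕄 μ with hN
  have hexpmul : exp A' = exp N * algebraMap ℂ 𝕄 (Complex.exp μ) := by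
    erw [Complex.exp_eq_exp_ℂ, algebraMap_exp_comm μ,
      ← exp_add_of_commute (Algebra.commutes μ N).symm, sub_add_cancel]
    rfl
  set b : 𝕄 := ∑' k : ℕ, ((k + 1).factorial⁻¹ : ℂ) • N ^ k with hbdef
  have hb : Summable fun k : ℕ => ((k + 1).factorial⁻¹ : ℂ) • N ^ k := by
    refine .of_norm_bounded_eventually (Real.summable_pow_div_factorial ‖N‖) ?_
    filter_upwards [Filter.eventually_cofinite_ne 0] with k hk
    rw [norm_smul, mul_comm, norm_inv, RCLike.norm_natCast, ← div_eq_mul_inv]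
    exact div_le_div₀ (pow_nonneg (norm_nonneg _) k) (norm_pow_le' N (zero_lt_iff.mpr hk))
      (mod_cast Nat.factorial_pos k) (mod_cast Nat.factorial_le (lt_add_one k).le)
  have h₀ : (∑' k : ℕ, ((k + 1).factorial⁻¹ : ℂ) • N ^ (k + 1)) = N * b := by
    simpa only [mul_smul_comm, pow_succ'] using hb.tsum_mul_left N
  have h₁ : (∑' k : ℕ, ((k + 1).factorial⁻¹ : ℂ) • N ^ (k + 1)) = b * N := by
    simpa only [pow_succ, Algebra.smul_mul_assoc] using hb.tsum_mul_right N
  have h₃ : exp N = 1 + N * b := by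
    rw [exp_eq_tsum ℂ]
    convert Summable.tsum_eq_zero_add (expSeries_summable' (𝕂 := ℂ) N)
    · rfl
    · rfl
    · simp only [Nat.factorial_zero, Nat.cast_one, inv_one, pow_zero, one_smul]
    · exact h₀.symm
  have hcomm : Commute N b := h₀.symm.trans h₁
  have key : exp A' - algebraMap ℂ 𝕄 (Complex.exp μ)
      = algebraMap ℂ 𝕄 (Complex.exp μ) * (b * N) := by
    rw [hexpmul, h₃]
    rw [add_mul, one_mul, add_sub_cancel_left, hcomm.eq,
      (Algebra.commutes (Complex.exp μ) (b * N)).symm]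
  refine ⟨algebraMap ℂ 𝕄 (Complex.exp μ) ^ n * b ^ n, ?_⟩
  rw [key]
  have hc1 : Commute (algebraMap ℂ 𝕄 (Complex.exp μ)) (b * N) := (Algebra.commutes _ _)
  rw [hc1.mul_pow, hcomm.symm.mul_pow, mul_assoc]

theorem spectrum_exp_subset (A' : 𝕄) :
    ∀ lam ∈ spectrum ℂ (exp A'), ∃ μ ∈ spectrum ℂ A', lam = Complex.exp μ := by
  rcases Nat.eq_zero_or_pos n with hn | hn
  · intro lam hl
    exact absurd (spectrum.mem_iff.mp hl)
      (by subst hn; exact fun h => h (isUnit_of_subsingleton _))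
  intro lam hl
  haveI : Nonempty (Fin n) := ⟨⟨0, hn⟩⟩
  classical
  set sF : Finset ℂ := (Matrix.finite_spectrum A').toFinset with hsF
  set p : Polynomial ℂ :=
    ∏ μ ∈ sF, (Polynomial.X - Polynomial.C (Complex.exp μ)) ^ n with hpdef
  set E : 𝕄 := exp A' with hE
  have hker : ∀ v : Fin n → ℂ, (Polynomial.aeval E p).mulVec v = 0 := by
    intro v
    have hv : v ∈ (⊤ : Submodule ℂ (Fin n → ℂ)) := trivial
    rw [← Module.End.iSup_maxGenEigenspace_eq_top (Matrix.toLinAlgEquiv' A')] at hv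
    refine Submodule.iSup_induction _ (motive := fun w => (Polynomial.aeval E p).mulVec w = 0) hv
      ?_ (Matrix.mulVec_zero _) ?_
    · intro μ w hw
      by_cases hw0 : w = 0
      · simp [hw0]
      rw [Module.End.maxGenEigenspace_eq_genEigenspace_finrank, Module.finrank_fin_fun,
        Module.End.mem_genEigenspace_nat] at hw
      have hmat : ((A' - algebraMap ℂ 𝕄 μ) ^ n).mulVec w = 0 := by
        rw [LinearMap.mem_ker] at hw
        have he : ((Matrix.toLinAlgEquiv' A' - μ • 1) ^ n : Module.End ℂ (Fin n → ℂ))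
            = Matrix.toLinAlgEquiv' ((A' - algebraMap ℂ 𝕄 μ) ^ n) := by
          rw [map_pow, map_sub, AlgEquiv.commutes, Algebra.algebraMap_eq_smul_one]
        rw [he] at hw
        exact hw
      have hμs : μ ∈ sF := by
        refine (Matrix.finite_spectrum A').mem_toFinset.mpr ?_
        rw [spectrum.mem_iff, ← neg_sub, IsUnit.neg_iff, Matrix.isUnit_iff_isUnit_det,
          isUnit_iff_ne_zero, ne_eq, not_not]
        have hdet : ((A' - algebraMap ℂ 𝕄 μ) ^ n).det = 0 :=
          (Matrix.exists_mulVec_eq_zero_iff).mp ⟨w, hw0, hmat⟩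
        rw [Matrix.det_pow] at hdet
        exact pow_eq_zero_iff hn.ne' |>.mp hdet
      obtain ⟨Q, hQ⟩ := exists_factor A' μ
      rw [← hE] at hQ
      have hq : p = (∏ ν ∈ sF.erase μ, (Polynomial.X - Polynomial.C (Complex.exp ν)) ^ n)
          * (Polynomial.X - Polynomial.C (Complex.exp μ)) ^ n :=
        (Finset.prod_erase_mul sF _ hμs).symm
      have haeval : Polynomial.aeval E p
          = (Polynomial.aeval E (∏ ν ∈ sF.erase μ, (Polynomial.X - Polynomial.C (Complex.exp ν)) ^ n) * Q)
            * (A' - algebraMap ℂ 𝕄 μ) ^ n := by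
        rw [hq, map_mul, map_pow, map_sub, Polynomial.aeval_X, Polynomial.aeval_C, hQ,
          ← mul_assoc]
      rw [haeval, ← Matrix.mulVec_mulVec, hmat, Matrix.mulVec_zero]
    · intro w₁ w₂ h1 h2
      rw [Matrix.mulVec_add, h1, h2, add_zero]
  have hmat0 : Polynomial.aeval E p = 0 := by
    ext i j
    have := congrFun (hker (Pi.single j 1)) i
    rw [Matrix.mulVec_single] at this
    simpa using this
  haveI : Nontrivial 𝕄 :=
    ⟨⟨0, 1, fun h => by simpa using congrFun (congrFun h ⟨0, hn⟩) ⟨0, hn⟩⟩⟩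
  have h1 := spectrum.subset_polynomial_aeval E p ⟨lam, hl, rfl⟩
  rw [hmat0, spectrum.zero_eq, Set.mem_singleton_iff] at h1
  simp only [hpdef, Polynomial.eval_prod, Polynomial.eval_pow, Polynomial.eval_sub,
    Polynomial.eval_X, Polynomial.eval_C] at h1
  obtain ⟨μ, hμ, hpow⟩ := Finset.prod_eq_zero_iff.mp h1
  exact ⟨μ, (Matrix.finite_spectrum A').mem_toFinset.mp hμ,
    sub_eq_zero.mp (pow_eq_zero_iff hn.ne' |>.mp hpow)⟩

theorem exists_pow_norm_lt_one (A' : 𝕄) (hA : ∀ μ ∈ spectrum ℂ A', μ.re < 0) :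
    ∃ k : ℕ, 0 < k ∧ ‖exp ((k : ℕ) • A')‖ < 1 := by
  set E : 𝕄 := exp A' with hE
  set sF : Finset ℂ := (Matrix.finite_spectrum A').toFinset with hsF
  set c : NNReal := sF.sup fun μ => ‖Complex.exp μ‖₊ with hc
  have hρ : spectralRadius ℂ E ≤ (c : ENNReal) := by
    rw [spectralRadius]
    refine iSup₂_le fun lam hlam => ?_
    obtain ⟨μ, hμ, rfl⟩ := spectrum_exp_subset A' lam hlam
    exact_mod_cast Finset.le_sup (f := fun μ => ‖Complex.exp μ‖₊)
      ((Matrix.finite_spectrum A').mem_toFinset.mpr hμ)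
  have hc1 : (c : ENNReal) < 1 := by
    rw [ENNReal.coe_lt_one_iff]
    refine Finset.sup_lt_iff (by norm_num) |>.mpr fun μ hμ => ?_
    have h2 : ‖Complex.exp μ‖ < 1 := by
      rw [Complex.norm_exp]
      exact Real.exp_lt_one_iff.mpr (hA μ ((Matrix.finite_spectrum A').mem_toFinset.mp hμ))
    exact_mod_cast h2
  have htend := spectrum.pow_nnnorm_pow_one_div_tendsto_nhds_spectralRadius E
  have hev := htend.eventually_lt_const (lt_of_le_of_lt hρ hc1)
  obtain ⟨k, hklt, hk1⟩ := (hev.and (eventually_ge_atTop 1)).exists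
  refine ⟨k, hk1, ?_⟩
  rw [Matrix.exp_nsmul, ← hE]
  by_contra hge
  push_neg at hge
  have h1 : (1 : ENNReal) ≤ (‖E ^ k‖₊ : ENNReal) := by
    exact_mod_cast (by exact_mod_cast hge : (1 : NNReal) ≤ ‖E ^ k‖₊)
  have h2 : (1 : ENNReal) ≤ (‖E ^ k‖₊ : ENNReal) ^ (1 / (k : ℝ)) := by
    calc (1 : ENNReal) = 1 ^ (1 / (k : ℝ)) := (ENNReal.one_rpow _).symm
    _ ≤ _ := ENNReal.rpow_le_rpow h1 (by positivity)
  exact absurd hklt (not_lt.mpr h2)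

theorem entry_le_norm (M : 𝕄) (i j : Fin n) : ‖M i j‖ ≤ ‖M‖ := by
  rw [Matrix.linfty_opNorm_def]
  have h1 : ‖M i j‖₊ ≤ ∑ k, ‖M i k‖₊ :=
    Finset.single_le_sum (f := fun k => ‖M i k‖₊) (fun _ _ => zero_le) (Finset.mem_univ j)
  have h2 : (∑ k, ‖M i k‖₊) ≤ Finset.univ.sup fun i => ∑ j, ‖M i j‖₊ :=
    Finset.le_sup (f := fun i => ∑ j, ‖M i j‖₊) (Finset.mem_univ i)
  exact_mod_cast h1.trans h2

theorem hurwitz_decay (A : Matrix (Fin n) (Fin n) ℝ) (hA : Hurwitz A) :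
    ∃ c ε : ℝ, 0 < ε ∧ 0 ≤ c ∧ ∀ s : ℝ, 0 ≤ s → ∀ i j,
      |mexp A s i j| ≤ c * Real.exp (-(ε * s)) := by
  set A' : 𝕄 := A.map Complex.ofReal with hA'
  have hmap : ∀ s : ℝ, (mexp A s).map Complex.ofReal = exp (s • A') := by
    intro s
    have h1 : ((Complex.ofRealHom).mapMatrix : Matrix (Fin n) (Fin n) ℝ →+* 𝕄) (exp (s • A))
        = exp (((Complex.ofRealHom).mapMatrix : Matrix (Fin n) (Fin n) ℝ →+* 𝕄) (s • A)) := by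
      refine map_exp _ ?_ _
      show Continuous fun M : Matrix (Fin n) (Fin n) ℝ => M.map Complex.ofReal
      exact continuous_pi fun i => continuous_pi fun j =>
        Complex.continuous_ofReal.comp ((continuous_apply j).comp (continuous_apply i))
    have h2 : ((Complex.ofRealHom).mapMatrix : Matrix (Fin n) (Fin n) ℝ →+* 𝕄) (s • A)
        = s • A' := by
      ext i j
      simp [hA', Matrix.map_apply, Complex.real_smul]
    rw [mexp, show ∀ M : Matrix (Fin n) (Fin n) ℝ, M.map Complex.ofReal
        = ((Complex.ofRealHom).mapMatrix : Matrix (Fin n) (Fin n) ℝ →+* 𝕄) M from fun _ => rfl,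
      h1, h2]
  have hentry : ∀ s : ℝ, ∀ i j, |mexp A s i j| ≤ ‖exp (s • A')‖ := by
    intro s i j
    have h0 : ((mexp A s).map Complex.ofReal) i j = ((mexp A s) i j : ℂ) := rfl
    have h1 : |mexp A s i j| = ‖((mexp A s).map Complex.ofReal) i j‖ := by
      rw [h0, Complex.norm_real, Real.norm_eq_abs]
    rw [h1, hmap s]
    exact entry_le_norm _ i j
  obtain ⟨k, hk0, hEk⟩ := exists_pow_norm_lt_one A' hA
  set T : ℝ := (k : ℝ) with hT
  have hT0 : (0 : ℝ) < T := by rw [hT]; exact_mod_cast hk0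
  set θ : ℝ := max ‖exp (T • A')‖ 2⁻¹ with hθ
  have hθ0 : 0 < θ := lt_max_of_lt_right (by norm_num)
  have hθ1 : θ < 1 := by
    refine max_lt ?_ (by norm_num)
    rw [hT, Nat.cast_smul_eq_nsmul ℝ]
    exact hEk
  have hcont : Continuous fun s : ℝ => exp (s • A') :=
    exp_continuous.comp (continuous_id.smul continuous_const)
  obtain ⟨C₀, hC₀⟩ := (isCompact_Icc (a := (0:ℝ)) (b := T)).exists_bound_of_continuousOn
    hcont.continuousOn
  set c₁ : ℝ := max C₀ 0 with hc₁
  have hc₁0 : 0 ≤ c₁ := le_max_right _ _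
  have hbd : ∀ x ∈ Set.Icc (0:ℝ) T, ‖exp (x • A')‖ ≤ c₁ := fun x hx =>
    (hC₀ x hx).trans (le_max_left _ _)
  have hclaim : ∀ s : ℝ, 0 ≤ s → ‖exp (s • A')‖ ≤ c₁ * θ ^ (⌊s / T⌋₊) := by
    intro s hs
    set m : ℕ := ⌊s / T⌋₊ with hm
    have hs1 : (m : ℝ) * T ≤ s := by
      rw [← le_div_iff₀ hT0]
      exact Nat.floor_le (div_nonneg hs hT0.le)
    have hs2 : s - m * T < T := by
      have := Nat.lt_floor_add_one (s / T)
      have h3 : s / T < m + 1 := this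
      nlinarith [(div_lt_iff₀ hT0).mp h3]
    rcases Nat.eq_zero_or_pos m with hm0 | hm0
    · rw [hm0, pow_zero, mul_one]
      refine hbd s ⟨hs, ?_⟩
      rw [hm0] at hs2
      push_cast at hs2
      linarith
    · have hsplit : exp (s • A') = exp ((s - m * T) • A') * (exp (T • A')) ^ m := by
        have hc : Commute ((s - m * T) • A') (((m : ℝ) * T) • A') :=
          ((Commute.refl A').smul_left _).smul_right _
        rw [← Matrix.exp_nsmul, ← Nat.cast_smul_eq_nsmul ℝ, smul_smul, ← Matrix.exp_add_of_commute _ _ hc,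
          ← add_smul]
        congr 1
        ring
      rw [hsplit]
      refine (norm_mul_le _ _).trans ?_
      have h4 : ‖exp ((s - m * T) • A')‖ ≤ c₁ :=
        hbd _ ⟨by linarith, by linarith⟩
      have h5 : ‖(exp (T • A')) ^ m‖ ≤ θ ^ m := by
        refine (norm_pow_le' _ hm0).trans ?_
        exact pow_le_pow_left₀ (norm_nonneg _) (le_max_left _ _) m
      exact mul_le_mul h4 h5 (norm_nonneg _) hc₁0
  have hlog : Real.log θ < 0 := Real.log_neg hθ0 hθ1
  refine ⟨c₁ * θ⁻¹, -(Real.log θ) / T, div_pos (neg_pos.mpr hlog) hT0,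
    mul_nonneg hc₁0 (inv_nonneg.mpr hθ0.le), fun s hs i j => ?_⟩
  refine (hentry s i j).trans ((hclaim s hs).trans ?_)
  have h6 : (θ : ℝ) ^ (⌊s / T⌋₊) ≤ θ⁻¹ * Real.exp (-(-(Real.log θ) / T * s)) := by
    have hm1 : s / T - 1 ≤ (⌊s / T⌋₊ : ℝ) := by
      have := Nat.lt_floor_add_one (s / T)
      linarith
    have h7 : θ ^ (⌊s / T⌋₊) = Real.exp ((⌊s / T⌋₊ : ℝ) * Real.log θ) := by
      conv_lhs => rw [← Real.exp_log hθ0]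
      rw [← Real.exp_nat_mul]
    rw [h7]
    have h8 : (⌊s / T⌋₊ : ℝ) * Real.log θ ≤ (s / T - 1) * Real.log θ :=
      mul_le_mul_of_nonpos_right hm1 hlog.le
    refine (Real.exp_le_exp.mpr h8).trans_eq ?_
    rw [sub_mul, one_mul, Real.exp_sub, Real.exp_log hθ0]
    rw [div_eq_mul_inv, mul_comm]
    congr 1
    ring_nf
  calc c₁ * θ ^ (⌊s / T⌋₊) ≤ c₁ * (θ⁻¹ * Real.exp (-(-(Real.log θ) / T * s))) :=
        mul_le_mul_of_nonneg_left h6 hc₁0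
    _ = c₁ * θ⁻¹ * Real.exp (-(-(Real.log θ) / T * s)) := by ring


end ComplexPart

variable {n : ℕ}

theorem mexp_continuous (A : Matrix (Fin n) (Fin n) ℝ) : Continuous (mexp A) := by
  letI : SeminormedRing (Matrix (Fin n) (Fin n) ℝ) := Matrix.linftyOpSemiNormedRing
  letI : NormedRing (Matrix (Fin n) (Fin n) ℝ) := Matrix.linftyOpNormedRing
  letI : NormedAlgebra ℝ (Matrix (Fin n) (Fin n) ℝ) := Matrix.linftyOpNormedAlgebra
  letI : NormedAlgebra ℚ (Matrix (Fin n) (Fin n) ℝ) := Matrix.linftyOpNormedAlgebra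
  exact (exp_continuous (𝔸 := Matrix (Fin n) (Fin n) ℝ)).comp (continuous_id.smul continuous_const)

theorem dot_mexp_continuous (A : Matrix (Fin n) (Fin n) ℝ) (w B : Fin n → ℝ) :
    Continuous fun s => dotProduct w ((mexp A s).mulVec B) := by
  refine Continuous.dotProduct continuous_const ?_
  exact Continuous.matrix_mulVec (mexp_continuous A) continuous_const

theorem abs_dot_le (w B : Fin n → ℝ) (M : Matrix (Fin n) (Fin n) ℝ) (c : ℝ)
    (hM : ∀ i j, |M i j| ≤ c) :
    |dotProduct w (M.mulVec B)| ≤ (∑ i, |w i|) * (∑ j, |B j|) * c := by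
  rcases Nat.eq_zero_or_pos n with h0 | h0
  · subst h0
    simp [dotProduct]
  have hc : 0 ≤ c := (abs_nonneg _).trans (hM ⟨0, h0⟩ ⟨0, h0⟩)
  have hinner : ∀ i, |(M.mulVec B) i| ≤ c * ∑ j, |B j| := by
    intro i
    show |dotProduct (M i) B| ≤ _
    calc |∑ j, M i j * B j| ≤ ∑ j, |M i j * B j| := Finset.abs_sum_le_sum_abs _ _
      _ ≤ ∑ j, c * |B j| := Finset.sum_le_sum fun j _ => by
            rw [abs_mul]
            exact mul_le_mul_of_nonneg_right (hM i j) (abs_nonneg _)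
      _ = c * ∑ j, |B j| := by rw [Finset.mul_sum]
  calc |∑ i, w i * (M.mulVec B) i| ≤ ∑ i, |w i * (M.mulVec B) i| :=
        Finset.abs_sum_le_sum_abs _ _
    _ ≤ ∑ i, |w i| * (c * ∑ j, |B j|) := Finset.sum_le_sum fun i _ => by
          rw [abs_mul]
          exact mul_le_mul_of_nonneg_left (hinner i) (abs_nonneg _)
    _ = (∑ i, |w i|) * (∑ j, |B j|) * c := by rw [← Finset.sum_mul]; ring

theorem integrand_integrable (A : Matrix (Fin n) (Fin n) ℝ) (hA : Hurwitz A)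
    (w B : Fin n → ℝ) :
    IntegrableOn (fun s => |dotProduct w ((mexp A s).mulVec B)|) (Set.Ioi (0:ℝ)) := by
  obtain ⟨c, ε, hε, hc, hdecay⟩ := hurwitz_decay A hA
  set K : ℝ := (∑ i, |w i|) * (∑ j, |B j|) with hK
  have hKpos : 0 ≤ K := by positivity
  have hg : IntegrableOn (fun s => K * c * Real.exp (-(ε * s))) (Set.Ioi (0:ℝ)) := by
    have := (exp_neg_integrableOn_Ioi 0 hε).const_mul (K * c)
    simpa [neg_mul, mul_assoc, IntegrableOn] using this
  refine Integrable.mono' hg ?_ ?_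
  · exact ((dot_mexp_continuous A w B).abs).aestronglyMeasurable
  · refine (ae_restrict_iff' measurableSet_Ioi).mpr (ae_of_all _ fun s hs => ?_)
    rw [Real.norm_eq_abs, abs_abs]
    have := abs_dot_le w B (mexp A s) (c * Real.exp (-(ε * s)))
      (fun i j => hdecay s (le_of_lt hs) i j)
    calc |dotProduct w ((mexp A s).mulVec B)| ≤ K * (c * Real.exp (-(ε * s))) := by
          rw [hK]; rw [mul_assoc] at this ⊢; exact this
      _ = K * c * Real.exp (-(ε * s)) := by ring

theorem parseval (C : Fin n → Fin n → ℝ)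
    (hC : ∀ i j, dotProduct (C i) (C j) = if i = j then (1 : ℝ) else 0)
    (v : Fin n → ℝ) :
    ∑ i, (dotProduct (C i) v) ^ 2 = ∑ j, v j ^ 2 := by
  classical
  set M : Matrix (Fin n) (Fin n) ℝ := Matrix.of C with hM
  have h1 : M * M.transpose = 1 := by
    ext i j
    simpa [hM, Matrix.mul_apply, Matrix.one_apply, dotProduct] using hC i j
  have h2 : M.transpose * M = 1 := mul_eq_one_comm.mp h1
  have h3 : ∀ j k, (∑ i, C i j * C i k) = if j = k then (1:ℝ) else 0 := by
    intro j k
    have := congrFun (congrFun h2 j) k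
    simpa [hM, Matrix.mul_apply, Matrix.transpose_apply, Matrix.one_apply] using this
  calc ∑ i, (dotProduct (C i) v) ^ 2
      = ∑ i, ∑ j, ∑ k, (C i j * C i k) * (v j * v k) := by
        refine Finset.sum_congr rfl fun i _ => ?_
        rw [dotProduct, sq, Finset.sum_mul_sum]
        exact Finset.sum_congr rfl fun j _ => Finset.sum_congr rfl fun k _ => by ring
    _ = ∑ j, ∑ k, (∑ i, C i j * C i k) * (v j * v k) := by
        rw [Finset.sum_comm]
        refine Finset.sum_congr rfl fun j _ => ?_
        rw [Finset.sum_comm]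
        exact Finset.sum_congr rfl fun k _ => by rw [Finset.sum_mul]
    _ = ∑ j, v j ^ 2 := by
        simp only [h3, ite_mul, one_mul, zero_mul, Finset.sum_ite_eq, Finset.mem_univ, if_true]
        exact Finset.sum_congr rfl fun j _ => by rw [sq]

theorem coord_bound (A : Matrix (Fin n) (Fin n) ℝ) (hA : Hurwitz A) (B : Fin n → ℝ)
    (t : ℝ) (ht : 0 ≤ t) (u : ℝ → ℝ) (hu : Measurable u)
    (hub : ∀ᵐ s ∂(volume.restrict (Set.Ici (0:ℝ))), |u s| ≤ 1) (w : Fin n → ℝ) :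
    |dotProduct w (∫ s in (0:ℝ)..t, u s • (mexp A (t - s)).mulVec B)|
      ≤ ∫ s in Set.Ioi (0:ℝ), |dotProduct w ((mexp A s).mulVec B)| := by
  classical
  set G : ℝ → (Fin n → ℝ) := fun s => (mexp A (t - s)).mulVec B with hG
  have hGcont : Continuous G :=
    Continuous.matrix_mulVec ((mexp_continuous A).comp (continuous_const.sub continuous_id))
      continuous_const
  have hu_Icc : ∀ᵐ s ∂(volume.restrict (Set.Icc (0:ℝ) t)), |u s| ≤ 1 :=
    ae_restrict_of_ae_restrict_of_subset Set.Icc_subset_Ici_self hub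
  have hu_Ioc : ∀ᵐ s ∂(volume.restrict (Set.Ioc (0:ℝ) t)), |u s| ≤ 1 :=
    ae_restrict_of_ae_restrict_of_subset (Set.Ioc_subset_Icc_self.trans Set.Icc_subset_Ici_self) hub
  obtain ⟨K, hK⟩ := (isCompact_Icc (a := (0:ℝ)) (b := t)).exists_bound_of_continuousOn
    hGcont.continuousOn
  have h_int : IntervalIntegrable (fun s => u s • G s) volume 0 t := by
    rw [intervalIntegrable_iff, Set.uIoc_of_le ht]
    refine Integrable.mono' (g := fun _ => K)
      (integrableOn_const measure_Ioc_lt_top.ne) ?_ ?_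
    · exact (hu.aemeasurable.aestronglyMeasurable.smul hGcont.aestronglyMeasurable)
    · filter_upwards [hu_Ioc, ae_restrict_mem measurableSet_Ioc] with s h1 h2
      rw [norm_smul, Real.norm_eq_abs]
      calc |u s| * ‖G s‖ ≤ 1 * K :=
            mul_le_mul h1 (hK s ⟨h2.1.le, h2.2⟩) (norm_nonneg _) zero_le_one
        _ = K := one_mul K
  set L : (Fin n → ℝ) →L[ℝ] ℝ :=
    ∑ j, (w j) • (ContinuousLinearMap.proj j : (Fin n → ℝ) →L[ℝ] ℝ) with hL
  have hLapp : ∀ v : Fin n → ℝ, L v = dotProduct w v := by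
    intro v
    rw [hL]
    simp [ContinuousLinearMap.sum_apply, dotProduct, smul_eq_mul]
  have h_scalar : IntervalIntegrable (fun s => u s * dotProduct w (G s)) volume 0 t := by
    have h2 : IntervalIntegrable (fun s => L (u s • G s)) volume 0 t := by
      rw [intervalIntegrable_iff] at h_int ⊢
      exact L.integrable_comp h_int
    have h3 : (fun s => L (u s • G s)) = fun s => u s * dotProduct w (G s) := by
      funext s
      rw [L.map_smul, smul_eq_mul, hLapp]
    rwa [h3] at h2
  have key : dotProduct w (∫ s in (0:ℝ)..t, u s • G s)
      = ∫ s in (0:ℝ)..t, u s * dotProduct w (G s) := by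
    rw [← hLapp, ← L.intervalIntegral_comp_comm h_int]
    refine intervalIntegral.integral_congr fun s _ => ?_
    rw [L.map_smul, smul_eq_mul, hLapp]
  rw [key]
  have habs : IntervalIntegrable (fun s => |dotProduct w (G s)|) volume 0 t :=
    ((Continuous.dotProduct continuous_const hGcont).abs).intervalIntegrable 0 t
  calc |∫ s in (0:ℝ)..t, u s * dotProduct w (G s)|
      ≤ ∫ s in (0:ℝ)..t, |u s * dotProduct w (G s)| :=
        intervalIntegral.abs_integral_le_integral_abs ht
    _ ≤ ∫ s in (0:ℝ)..t, |dotProduct w (G s)| := by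
        refine intervalIntegral.integral_mono_ae_restrict ht h_scalar.abs habs ?_
        filter_upwards [hu_Icc] with s h1
        rw [abs_mul]
        exact mul_le_of_le_one_left (abs_nonneg _) h1
    _ = ∫ s in (0:ℝ)..t, |dotProduct w ((mexp A s).mulVec B)| := by
        have h4 := intervalIntegral.integral_comp_sub_left
          (a := (0:ℝ)) (b := t) (fun σ => |dotProduct w ((mexp A σ).mulVec B)|) t
        rw [sub_self, sub_zero] at h4
        exact h4
    _ = ∫ s in Set.Ioc (0:ℝ) t, |dotProduct w ((mexp A s).mulVec B)| :=
        intervalIntegral.integral_of_le ht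
    _ ≤ ∫ s in Set.Ioi (0:ℝ), |dotProduct w ((mexp A s).mulVec B)| :=
        setIntegral_mono_set (integrand_integrable A hA w B)
          (ae_of_all _ fun s => abs_nonneg _)
          (HasSubset.Subset.eventuallyLE Set.Ioc_subset_Ioi_self)

theorem gain_bound (A : Matrix (Fin n) (Fin n) ℝ) (B : Fin n → ℝ) (hA : Hurwitz A)
    (x : (ℝ → ℝ) → ℝ → Fin n → ℝ)
    (hx : x = fun u t => ∫ s in (0 : ℝ)..t, u s • (mexp A (t - s)).mulVec B)
    (γ : ℝ)
    (hγ : γ = sSup {r | ∃ t ≥ (0 : ℝ), ∃ u : ℝ → ℝ, Measurable u ∧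
      (∀ᵐ s ∂(volume.restrict (Set.Ici (0 : ℝ))), |u s| ≤ 1) ∧ r = eNorm (x u t)})
    (C : Fin n → Fin n → ℝ)
    (hC : ∀ i j, dotProduct (C i) (C j) = if i = j then (1 : ℝ) else 0) :
    γ ≤ Real.sqrt (∑ i,
      (∫ s in Set.Ioi (0 : ℝ), |dotProduct (C i) ((mexp A s).mulVec B)|) ^ 2) := by
  subst hγ hx
  refine Real.sSup_le ?_ (Real.sqrt_nonneg _)
  rintro r ⟨t, ht, u, hu, hub, rfl⟩
  show Real.sqrt (∑ j, (∫ s in (0:ℝ)..t, u s • (mexp A (t - s)).mulVec B) j ^ 2) ≤ _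
  rw [← parseval C hC]
  refine Real.sqrt_le_sqrt (Finset.sum_le_sum fun i _ => ?_)
  have hcoord := coord_bound A hA B t ht u hu hub (C i)
  calc (dotProduct (C i) (∫ s in (0:ℝ)..t, u s • (mexp A (t - s)).mulVec B)) ^ 2
      = |dotProduct (C i) (∫ s in (0:ℝ)..t, u s • (mexp A (t - s)).mulVec B)| ^ 2 :=
        (sq_abs _).symm
    _ ≤ (∫ s in Set.Ioi (0:ℝ), |dotProduct (C i) ((mexp A s).mulVec B)|) ^ 2 :=
        pow_le_pow_left₀ (abs_nonneg _) hcoord 2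


end ISSAux

/-- Section 5.4, formulas (5.21)–(5.23): for Hurwitz `A`, every orthonormal basis
`C₁, …, C_n` of `ℝⁿ` gives the upper bound
`γ ≤ √(Σᵢ (∫₀^∞ |Cᵢᵀ e^{As} B| ds)²)` for the minimum ISS-gain, and consequently `γ` is
bounded by the infimum of this quantity over all orthonormal bases. -/
theorem statement_18 {n : ℕ}
    (A : Matrix (Fin n) (Fin n) ℝ) (B : Fin n → ℝ) (hA : Hurwitz A)
    (x : (ℝ → ℝ) → ℝ → Fin n → ℝ)
    (hx : x = fun u t => ∫ s in (0 : ℝ)..t, u s • (mexp A (t - s)).mulVec B)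
    (γ : ℝ)
    (hγ : γ = sSup {r | ∃ t ≥ (0 : ℝ), ∃ u : ℝ → ℝ, Measurable u ∧
      (∀ᵐ s ∂(volume.restrict (Set.Ici (0 : ℝ))), |u s| ≤ 1) ∧ r = eNorm (x u t)})
    (C : Fin n → Fin n → ℝ)
    (hC : ∀ i j, dotProduct (C i) (C j) = if i = j then (1 : ℝ) else 0) :
    γ ≤ Real.sqrt (∑ i,
      (∫ s in Set.Ioi (0 : ℝ), |dotProduct (C i) ((mexp A s).mulVec B)|) ^ 2) ∧
    γ ≤ sInf {r | ∃ C' : Fin n → Fin n → ℝ,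
      (∀ i j, dotProduct (C' i) (C' j) = if i = j then (1 : ℝ) else 0) ∧
      r = Real.sqrt (∑ i,
        (∫ s in Set.Ioi (0 : ℝ), |dotProduct (C' i) ((mexp A s).mulVec B)|) ^ 2)} := by
  refine ⟨ISSAux.gain_bound A B hA x hx γ hγ C hC, ?_⟩
  refine le_csInf ⟨_, C, hC, rfl⟩ ?_
  rintro r ⟨C', hC', rfl⟩
  exact ISSAux.gain_bound A B hA x hx γ hγ C' hC'
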